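/- Let G be a DAG with CPDAG G*, and let (a,u,a') be an unshielded triple in G* (a and a' are both adjacent to u but not adjacent to each other) such that both edges a−u and a'−u are undirected in G*. Then every DAG G' ∈ [G] contains the edge u→a or the edge u→a'. -/

import Mathlib

/-! Basic graphical-model definitions: DAGs as binary relations on a finite
vertex type, d-separation via paths (lists of vertices), Markov equivalence,
and definite (non-)ancestral relations. -/

variable {V : Type*}

/-- Two nodes are adjacent in the digraph `E` if there is an edge between them
in either direction. -/
def Adjacent (E : V → V → Prop) (a b : V) : Prop := E a b ∨ E b a

/-- A digraph is acyclic if it has no directed cycles. -/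
def Acyclic (E : V → V → Prop) : Prop := ∀ v : V, ¬ Relation.TransGen E v v

/-- `u` is an ancestor of `v`: there is a directed path from `u` to `v`
(by convention, `v` is an ancestor of itself). -/
def Anc (E : V → V → Prop) (u v : V) : Prop := Relation.ReflTransGen E u v

/-- A list of vertices is a path in the skeleton of `E`: consecutive vertices
are adjacent and no vertex repeats. -/
def IsPath (E : V → V → Prop) (p : List V) : Prop :=
  p.Nodup ∧ List.Chain' (Adjacent E) p

/-- A path `p` is d-connecting given the conditioning set `C` if every collider
on it is an ancestor of an element of `C` and every non-collider on it is
outside `C`.  Interior vertices of `p` are exactly the middle elements `x` of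
consecutive triples `[a, x, b]` of `p`; such an `x` is a collider when both
incident edges point into it. -/
def IsDConnectingPath (E : V → V → Prop) (C : Set V) (p : List V) : Prop :=
  ∀ a x b : V, [a, x, b] <:+: p →
    ((E a x ∧ E b x) → ∃ c ∈ C, Anc E x c) ∧ (¬ (E a x ∧ E b x) → x ∉ C)

/-- `u` and `v` are d-connected given `C` in `E`. -/
def DConn (E : V → V → Prop) (C : Set V) (u v : V) : Prop :=
  ∃ p : List V, IsPath E p ∧ p.head? = some u ∧ p.getLast? = some v ∧
    IsDConnectingPath E C p

/-- `u` and `v` are d-separated given `C` in `E`. -/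
def DSep (E : V → V → Prop) (C : Set V) (u v : V) : Prop := ¬ DConn E C u v

/-- Two DAGs on the same vertex set are Markov equivalent if they have exactly
the same d-separation relations. -/
def MarkovEquiv (E E' : V → V → Prop) : Prop :=
  ∀ (u v : V) (C : Set V), u ≠ v → u ∉ C → v ∉ C → (DSep E C u v ↔ DSep E' C u v)

/-- `u` is definite ancestral to `v` (`u ⇝ v`): `u` is an ancestor of `v` in
every DAG Markov equivalent to `E`. -/
def DefAnc (E : V → V → Prop) (u v : V) : Prop :=
  ∀ E' : V → V → Prop, Acyclic E' → MarkovEquiv E E' → Anc E' u v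

/-- `u` is definite non-ancestral to `v` (`u ̸⇝ v`): `u` is not an ancestor of
`v` in any DAG Markov equivalent to `E`. -/
def DefNonAnc (E : V → V → Prop) (u v : V) : Prop :=
  ∀ E' : V → V → Prop, Acyclic E' → MarkovEquiv E E' → ¬ Anc E' u v

/-- The CPDAG of `E` has a directed edge `a → b` iff `a` and `b` are adjacent
and the edge is oriented `a → b` in every member of the Markov equivalence
class of `E`. -/
def CPDAGDir (E : V → V → Prop) (a b : V) : Prop :=
  Adjacent E a b ∧ ∀ E' : V → V → Prop, Acyclic E' → MarkovEquiv E E' → E' a b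

/-- A possibly directed path in the CPDAG of `E`: a path in the skeleton such
that no edge on it is directed backwards (as `x_{i+1} → x_i`) in the CPDAG. -/
def IsPossiblyDirectedPath (E : V → V → Prop) (p : List V) : Prop :=
  p.Nodup ∧ List.Chain' (fun a b => Adjacent E a b ∧ ¬ CPDAGDir E b a) p

/-- A path is unshielded if no three consecutive vertices on it are pairwise
adjacent. -/
def UnshieldedPath (E : V → V → Prop) (p : List V) : Prop :=
  ∀ a x b : V, [a, x, b] <:+: p → ¬ Adjacent E a b


section AUX

lemma fwd (E : V → V → Prop) (C : Set V) :
    ∀ (p : List V) (x y : V), E x y →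
    List.Chain' (Adjacent E) (x :: y :: p) →
    (∀ a z b : V, [a, z, b] <:+: (x :: y :: p) → (E a z ∧ E b z) → ∃ c ∈ C, Anc E z c) →
    Anc E y ((y :: p).getLast (List.cons_ne_nil _ _)) ∨ ∃ c ∈ C, Anc E y c := by
  intro p
  induction p with
  | nil => intro x y _ _ _; left; exact Relation.ReflTransGen.refl
  | cons z p' ih =>
    intro x y hxy hch hcol
    by_cases hzy : E z y
    · right; exact hcol x y z ⟨[], p', rfl⟩ ⟨hxy, hzy⟩
    · have hch' : List.Chain' (Adjacent E) (y :: z :: p') := (List.isChain_cons_cons.mp hch).2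
      have hyz : E y z := by
        rcases (List.isChain_cons_cons.mp hch').1 with h | h
        · exact h
        · exact absurd h hzy
      have := ih y z hyz hch'
        (fun a w b h hc => hcol a w b (h.trans (List.suffix_cons x _).isInfix) hc)
      rcases this with h | ⟨c, hc, hanc⟩
      · left
        rw [List.getLast_cons (List.cons_ne_nil _ _)]
        exact Relation.ReflTransGen.head hyz h
      · right; exact ⟨c, hc, Relation.ReflTransGen.head hyz hanc⟩

lemma sep (E : V → V → Prop) (hE : Acyclic E) (a b : V) (hne : a ≠ b)
    (hnadj : ¬ Adjacent E a b) :
    DSep E {v | v ≠ a ∧ v ≠ b ∧ (Anc E v a ∨ Anc E v b)} a b := by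
  set C : Set V := {v | v ≠ a ∧ v ≠ b ∧ (Anc E v a ∨ Anc E v b)} with hC
  rintro ⟨p, ⟨hnd, hch⟩, hhead, hlast, hdc⟩
  obtain ⟨q, rfl⟩ : ∃ q, p = a :: q := by
    cases p with
    | nil => simp at hhead
    | cons x q => exact ⟨q, by simp_all⟩
  match q, hlast, hnd, hch, hdc with
  | [], hlast, _, _, _ => exact hne (by simpa using hlast)
  | [y], hlast, hnd, hch, hdc =>
      have hy : y = b := by simpa using hlast
      exact hnadj (hy ▸ (List.isChain_cons_cons.mp hch).1)
  | y :: z :: q3, hlast, hnd, hch, hdc =>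
  have hbz : (z :: q3).getLast (List.cons_ne_nil _ _) = b := by
    have h1 : (a :: y :: z :: q3).getLast? = (z :: q3).getLast? := by
      rw [List.getLast?_cons_cons, List.getLast?_cons_cons]
    rw [h1, List.getLast?_eq_getLast (List.cons_ne_nil _ _)] at hlast
    exact Option.some.inj hlast
  have hchy : List.Chain' (Adjacent E) (y :: z :: q3) := (List.isChain_cons_cons.mp hch).2
  have hay : Adjacent E a y := (List.isChain_cons_cons.mp hch).1
  have hyzadj : Adjacent E y z := (List.isChain_cons_cons.mp hchy).1
  simp only [List.nodup_cons, List.mem_cons] at hnd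
  have hdc1 := hdc a y z ⟨[], q3, rfl⟩
  by_cases hcolY : E a y ∧ E z y
  · obtain ⟨c, hcC, hanc⟩ := hdc1.1 hcolY
    have hyab : Anc E y a ∨ Anc E y b := by
      rcases hcC.2.2 with h | h
      · exact Or.inl (hanc.trans h)
      · exact Or.inr (hanc.trans h)
    match q3, hbz, hnd, hch, hchy, hdc with
    | [], hbz, hnd, hch, hchy, hdc =>
      have hzb : z = b := hbz
      rcases hyab with h | h
      · exact hE a (Relation.TransGen.head' hcolY.1 h)
      · exact hE b (Relation.TransGen.head' (hzb ▸ hcolY.2) h)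
    | w :: q4, hbz, hnd, hch, hchy, hdc =>
      have hdc2 := hdc y z w ⟨[a], q4, rfl⟩
      by_cases hcolZ : E y z ∧ E w z
      · exact hE y (Relation.TransGen.head hcolZ.1 (Relation.TransGen.single hcolY.2))
      · apply hdc2.2 hcolZ
        refine ⟨?_, ?_, ?_⟩
        · intro h; exact hnd.1 (Or.inr (Or.inl h.symm))
        · intro h
          rw [← hbz, List.getLast_cons (List.cons_ne_nil _ _)] at h
          have hmem : z ∈ w :: q4 := h ▸ List.getLast_mem _
          exact hnd.2.2.1 (by simpa using hmem)
        · have hchz : List.Chain' (Adjacent E) (z :: w :: q4) := (List.isChain_cons_cons.mp hchy).2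
          by_cases hzw : E z w
          · have := fwd E C q4 z w hzw hchz
              (fun A X B h hc => (hdc A X B (h.trans ⟨[a, y], [], by simp⟩)).1 hc)
            rcases this with h | ⟨c', hc', hanc'⟩
            · right
              rw [← hbz, List.getLast_cons (List.cons_ne_nil _ _)]
              exact Relation.ReflTransGen.head hzw h
            · rcases hc'.2.2 with h | h
              · exact Or.inl ((Relation.ReflTransGen.head hzw hanc').trans h)
              · exact Or.inr ((Relation.ReflTransGen.head hzw hanc').trans h)
          · have hzy' : E z y := hcolY.2
            rcases hyab with h | h
            · exact Or.inl (Relation.ReflTransGen.head hzy' h)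
            · exact Or.inr (Relation.ReflTransGen.head hzy' h)
  · apply hdc1.2 hcolY
    refine ⟨?_, ?_, ?_⟩
    · intro h; exact hnd.1 (Or.inl h.symm)
    · intro h
      rw [← hbz] at h
      have hmem : y ∈ z :: q3 := h ▸ List.getLast_mem _
      exact hnd.2.1 (by simpa using hmem)
    · by_cases hyz : E y z
      · have := fwd E C q3 y z hyz hchy
          (fun A X B h hc => (hdc A X B (h.trans ⟨[a], [], by simp⟩)).1 hc)
        rcases this with h | ⟨c', hc', hanc'⟩
        · right
          rw [hbz] at h
          exact Relation.ReflTransGen.head hyz h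
        · rcases hc'.2.2 with h | h
          · exact Or.inl ((Relation.ReflTransGen.head hyz hanc').trans h)
          · exact Or.inr ((Relation.ReflTransGen.head hyz hanc').trans h)
      · have hya : E y a := by
          have hzy : E z y := by
            rcases hyzadj with h | h
            · exact absurd h hyz
            · exact h
          rcases hay with h | h
          · exact absurd ⟨h, hzy⟩ hcolY
          · exact h
        exact Or.inl (Relation.ReflTransGen.single hya)

lemma dconn_adj (E : V → V → Prop) (C : Set V) {a u : V} (hadj : Adjacent E a u)
    (hne : a ≠ u) : DConn E C a u := by
  refine ⟨[a, u], ⟨by simp [hne], List.isChain_pair.mpr hadj⟩, rfl, rfl, ?_⟩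
  intro x y z h
  have := h.sublist.length_le
  simp at this

lemma adj_pres {E E' : V → V → Prop} (hE' : Acyclic E') (heq : MarkovEquiv E E')
    {a u : V} (hne : a ≠ u) (hadj : Adjacent E a u) : Adjacent E' a u := by
  by_contra h
  have hds := sep E' hE' a u hne h
  have haC : a ∉ {v | v ≠ a ∧ v ≠ u ∧ (Anc E' v a ∨ Anc E' v u)} := by
    intro hc; exact hc.1 rfl
  have huC : u ∉ {v | v ≠ a ∧ v ≠ u ∧ (Anc E' v a ∨ Anc E' v u)} := by
    intro hc; exact hc.2.1 rfl
  have := (heq a u _ hne haC huC).mpr hds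
  exact this (dconn_adj E _ hadj hne)

lemma collider_transfer {E1 E2 : V → V → Prop} (hE1 : Acyclic E1) (hE2 : Acyclic E2)
    (heq : MarkovEquiv E1 E2) {a u a' : V} (haa' : a ≠ a')
    (h1 : E1 a u) (h2 : E1 a' u) (hnadj1 : ¬ Adjacent E1 a a')
    (hadj2a : Adjacent E2 a u) (hadj2a' : Adjacent E2 a' u) :
    E2 a u ∧ E2 a' u := by
  set C : Set V := {v | v ≠ a ∧ v ≠ a' ∧ (Anc E1 v a ∨ Anc E1 v a')} with hCdef
  have hds1 : DSep E1 C a a' := sep E1 hE1 a a' haa' hnadj1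
  have hau : a ≠ u := fun h => hE1 u (Relation.TransGen.single (h ▸ h1))
  have ha'u : a' ≠ u := fun h => hE1 u (Relation.TransGen.single (h ▸ h2))
  have huC : u ∉ C := by
    rintro ⟨_, _, h | h⟩
    · exact hE1 u (Relation.TransGen.tail' h h1)
    · exact hE1 u (Relation.TransGen.tail' h h2)
  have haC : a ∉ C := fun hc => hc.1 rfl
  have ha'C : a' ∉ C := fun hc => hc.2.1 rfl
  have hds2 : DSep E2 C a a' := (heq a a' C haa' haC ha'C).mp hds1
  by_contra hcon
  apply hds2
  refine ⟨[a, u, a'], ⟨by simp [hau, haa', Ne.symm ha'u], ?_⟩, rfl, rfl, ?_⟩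
  · refine List.isChain_cons_cons.mpr ⟨hadj2a, List.isChain_cons_cons.mpr ⟨Or.symm hadj2a', ?_⟩⟩
    simp
  · intro x y z h
    have hlen : [x, y, z] = [a, u, a'] := h.sublist.eq_of_length (by simp)
    injection hlen with e1 hlen; injection hlen with e2 hlen; injection hlen with e3 _
    subst e1; subst e2; subst e3
    exact ⟨fun hc => absurd hc hcon, fun _ => huC⟩

end AUX

/-- step of the proof of Lemma 1: if `(a, u, a')` is an
unshielded triple in the CPDAG of `E` whose two edges are both undirected, then
every member of the Markov equivalence class of `E` contains the edge `u → a`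
or the edge `u → a'`. -/
theorem stmt17 [Fintype V] (E : V → V → Prop) (hE : Acyclic E) (a u a' : V)
    (hau : a ≠ u) (ha'u : a' ≠ u) (haa' : a ≠ a')
    (hadj1 : Adjacent E a u) (hadj2 : Adjacent E a' u)
    (hnonadj : ¬ Adjacent E a a')
    (hundir1 : ¬ CPDAGDir E a u ∧ ¬ CPDAGDir E u a)
    (hundir2 : ¬ CPDAGDir E a' u ∧ ¬ CPDAGDir E u a') :
    ∀ E' : V → V → Prop, Acyclic E' → MarkovEquiv E E' → E' u a ∨ E' u a' := by
  intro E' hE' heq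
  by_contra hcon
  push_neg at hcon
  obtain ⟨h1, h2⟩ := hcon
  have heq' : MarkovEquiv E' E := fun x y C hxy hx hy => (heq x y C hxy hx hy).symm
  have hadj1' : Adjacent E' a u := adj_pres hE' heq hau hadj1
  have hadj2' : Adjacent E' a' u := adj_pres hE' heq ha'u hadj2
  have hE'au : E' a u := hadj1'.resolve_right h1
  have hE'a'u : E' a' u := hadj2'.resolve_right h2
  have hnadj' : ¬ Adjacent E' a a' := fun h => hnonadj (adj_pres hE heq' haa' h)
  have hne1 := hundir1.1
  rw [CPDAGDir] at hne1
  push_neg at hne1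
  obtain ⟨E'', hE'', heq2, hnotau⟩ := hne1 hadj1
  have heqE'E'' : MarkovEquiv E' E'' := fun x y C hxy hx hy =>
    ((heq x y C hxy hx hy).symm.trans (heq2 x y C hxy hx hy))
  have hadjE'' : Adjacent E'' a u := adj_pres hE'' heq2 hau hadj1
  have hadjE''2 : Adjacent E'' a' u := adj_pres hE'' heq2 ha'u hadj2
  have := collider_transfer hE' hE'' heqE'E'' haa' hE'au hE'a'u hnadj' hadjE'' hadjE''2
  exact hnotau this.1
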